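/- arXiv:1410.3842 — 3 statements merged into one kernel-verified Lean document; each statement's English description precedes it below -/
import Mathlib

section
/- Let λ₁ > 0 and consider the mean-field host density equation u' = (λ₁(1−u) − 1)u. If λ₁ ≤ 1, then every solution u : [0,∞) → ℝ with u(0) ∈ (0,1] satisfies u(t) → 0 as t → ∞. -/
open Filter Real Set intervalIntegral MeasureTheory

theorem meanField_host_extinction (lam1 : ℝ) (hlam : 0 < lam1) (hle : lam1 ≤ 1)
    (u : ℝ → ℝ)
    (hderiv : ∀ t : ℝ, 0 ≤ t → HasDerivAt u ((lam1 * (1 - u t) - 1) * u t) t)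
    (h0 : u 0 ∈ Set.Ioc (0 : ℝ) 1) :
    Tendsto u atTop (nhds 0) := by
  obtain ⟨hu0, hu1⟩ := h0
  -- continuity of u on [0, ∞)
  have hucont : ∀ t : ℝ, 0 ≤ t → ContinuousAt u t := fun t ht =>
    (hderiv t ht).continuousAt
  have huconOn : ContinuousOn u (Ici 0) := fun t ht =>
    (hucont t ht).continuousWithinAt
  -- the continuous extension of the coefficient
  set w : ℝ → ℝ := fun s => lam1 * (1 - u (max s 0)) - 1 with hw_def
  have hwcont : Continuous w := by
    have hmax : Continuous fun s : ℝ => max s 0 := continuous_id.max continuous_const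
    have : Continuous fun s : ℝ => u (max s 0) :=
      huconOn.comp_continuous hmax (fun x => Set.mem_Ici.2 (le_max_right _ _))
    continuity
  have hweq : ∀ s : ℝ, 0 ≤ s → w s = lam1 * (1 - u s) - 1 := by
    intro s hs; simp [hw_def, max_eq_left hs]
  -- F t = ∫_0^t w
  set F : ℝ → ℝ := fun t => ∫ s in (0:ℝ)..t, w s with hF_def
  have hFderiv : ∀ t : ℝ, HasDerivAt F (w t) t := fun t =>
    integral_hasDerivAt_right (hwcont.intervalIntegrable _ _)
      (hwcont.stronglyMeasurableAtFilter _ _) hwcont.continuousAt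
  have hFcont : Continuous F :=
    continuous_iff_continuousAt.2 fun t => (hFderiv t).continuousAt
  -- g = u * exp(-F) is constant on [0, ∞)
  have hpos : ∀ t : ℝ, 0 ≤ t → 0 < u t := by
    intro t ht
    set g : ℝ → ℝ := fun s => u s * Real.exp (-F s) with hg_def
    have hgderiv : ∀ s : ℝ, 0 ≤ s → HasDerivAt g 0 s := by
      intro s hs
      have h1 := (hderiv s hs).mul (((hFderiv s).neg).exp)
      have : (lam1 * (1 - u s) - 1) * u s * Real.exp (-F s) +
          u s * (Real.exp (-F s) * -w s) = 0 := by
        rw [hweq s hs]; ring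
      simp only [Pi.neg_apply] at h1
      rw [this] at h1
      exact h1
    have hgcont : ContinuousOn g (Icc 0 t) := by
      apply ContinuousOn.mul (huconOn.mono Icc_subset_Ici_self)
      exact (hFcont.neg.rexp).continuousOn
    have hconst : g t = g 0 :=
      constant_of_has_deriv_right_zero hgcont
        (fun x hx => (hgderiv x hx.1).hasDerivWithinAt) t ⟨ht, le_refl t⟩
    have : u t * Real.exp (-F t) = u 0 * Real.exp (-F 0) := hconst
    have hgt : 0 < u t * Real.exp (-F t) := by
      rw [this]; positivity
    nlinarith [Real.exp_pos (-F t)]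
  -- v = 1/u
  set v : ℝ → ℝ := fun t => (u t)⁻¹ with hv_def
  have hvpos : ∀ t : ℝ, 0 ≤ t → 0 < v t := fun t ht => by
    simpa [hv_def] using inv_pos.2 (hpos t ht)
  -- h = v - lam1 * t is monotone on [0, ∞)
  have hmono : MonotoneOn (fun t => v t - lam1 * t) (Ici 0) := by
    apply monotoneOn_of_hasDerivWithinAt_nonneg (convex_Ici 0)
      (f' := fun t => (1 - lam1) / u t)
    · exact ((huconOn.inv₀ (fun t ht => (hpos t ht).ne')).sub
        (continuous_const.mul continuous_id).continuousOn)
    · intro x hx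
      rw [interior_Ici] at hx
      have hx0 : (0:ℝ) ≤ x := le_of_lt hx
      have hux := hpos x hx0
      have h1 : HasDerivAt v (-((lam1 * (1 - u x) - 1) * u x) / (u x) ^ 2) x :=
        (hderiv x hx0).inv hux.ne'
      have heq : -((lam1 * (1 - u x) - 1) * u x) / (u x) ^ 2 - lam1 = (1 - lam1) / u x := by
        field_simp
        ring
      have h2 : HasDerivAt (fun t => v t - lam1 * t)
          (-((lam1 * (1 - u x) - 1) * u x) / (u x) ^ 2 - lam1) x := by
        exact (h1.sub ((hasDerivAt_id x).const_mul lam1)).congr_deriv (by simp)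
      rw [heq] at h2
      exact h2.hasDerivWithinAt
    · intro x hx
      rw [interior_Ici] at hx
      have := hpos x hx.le
      have : 0 ≤ 1 - lam1 := by linarith
      positivity
  have hvlb : ∀ t : ℝ, 0 ≤ t → v 0 + lam1 * t ≤ v t := by
    intro t ht
    have := hmono (self_mem_Ici) ht ht
    simp only [mul_zero, sub_zero] at this
    linarith
  -- upper bound and squeeze
  have hub : ∀ t : ℝ, 0 ≤ t → u t ≤ (v 0 + lam1 * t)⁻¹ := by
    intro t ht
    have hb0 : 0 < v 0 + lam1 * t := by
      have := hvpos 0 le_rfl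
      nlinarith
    have h1 : (v t)⁻¹ ≤ (v 0 + lam1 * t)⁻¹ := inv_anti₀ hb0 (hvlb t ht)
    rwa [hv_def, inv_inv] at h1
  have hupper : Tendsto (fun t => (v 0 + lam1 * t)⁻¹) atTop (nhds 0) := by
    apply Tendsto.inv_tendsto_atTop
    exact tendsto_atTop_add_const_left _ _ (tendsto_atTop_atTop_of_monotone
      (fun a b hab => by nlinarith) (fun b => ⟨b / lam1, by field_simp; exact le_rfl⟩))
  apply tendsto_of_tendsto_of_tendsto_of_le_of_le' tendsto_const_nhds hupper
  · filter_upwards [eventually_ge_atTop (0:ℝ)] with t ht using (hpos t ht).le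
  · filter_upwards [eventually_ge_atTop (0:ℝ)] with t ht using hub t ht
end

section
/- Let λ₂ > 0, δ ≥ 0, and u* ∈ (0,1] with u* ≤ δ/λ₂. Then every differentiable solution v : [0,∞) → ℝ of v' = (λ₂(u* − v) − δ)v with v(0) ∈ (0, u*] satisfies v(t) → 0 as t → ∞. -/
open Filter Real Set

theorem meanField_infection_extinction (lam2 δ ustar : ℝ)
    (hlam2 : 0 < lam2) (hδ : 0 ≤ δ) (hu : ustar ∈ Set.Ioc (0 : ℝ) 1)
    (hsub : ustar ≤ δ / lam2)
    (v : ℝ → ℝ)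
    (hderiv : ∀ t : ℝ, 0 ≤ t → HasDerivAt v ((lam2 * (ustar - v t) - δ) * v t) t)
    (h0 : v 0 ∈ Set.Ioc (0 : ℝ) ustar) :
    Tendsto v atTop (nhds 0) := by
  have hups : lam2 * ustar ≤ δ := by
    rw [le_div_iff₀ hlam2] at hsub; linarith [hsub]
  -- continuity of v on [0,∞)
  have hvc : ∀ t : ℝ, 0 ≤ t → ContinuousAt v t := fun t ht => (hderiv t ht).continuousAt
  -- the truncated function
  set w : ℝ → ℝ := fun t => v (max t 0) with hw
  have hwc : Continuous w := by
    apply continuous_iff_continuousAt.mpr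
    intro t
    have hm : ContinuousAt (fun s : ℝ => max s 0) t :=
      (continuous_id.max continuous_const).continuousAt
    exact ContinuousAt.comp (x := t) (g := v) (f := fun s : ℝ => max s 0)
      (hvc _ (le_max_right t 0)) hm
  have hweq : ∀ t : ℝ, 0 ≤ t → w t = v t := fun t ht => by simp [hw, max_eq_left ht]
  -- the integrand
  set f : ℝ → ℝ := fun s => lam2 * (ustar - w s) - δ with hf
  have hfc : Continuous f := by continuity
  set F : ℝ → ℝ := fun t => ∫ s in (0:ℝ)..t, f s with hF
  have hFd : ∀ b : ℝ, HasDerivAt F (f b) b := fun b =>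
    (hfc.integral_hasStrictDerivAt 0 b).hasDerivAt
  -- positivity of v on [0,∞)
  have hpos : ∀ t : ℝ, 0 ≤ t → 0 < v t := by
    intro t ht
    set g : ℝ → ℝ := fun s => v s * Real.exp (-F s) with hg
    have hgd : ∀ s : ℝ, 0 ≤ s → HasDerivAt g 0 s := by
      intro s hs
      have h1 : HasDerivAt (fun u => Real.exp (-F u)) (Real.exp (-F s) * (-f s)) s :=
        ((hFd s).neg.exp).congr_deriv (by simp only [Pi.neg_apply])
      have h2 : HasDerivAt (fun u => v u * Real.exp (-F u))
        ((lam2 * (ustar - v s) - δ) * v s * Real.exp (-F s) + v s * (Real.exp (-F s) * -f s)) s :=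
        (hderiv s hs).mul h1
      convert h2 using 1
      have : f s = lam2 * (ustar - v s) - δ := by rw [hf]; simp [hweq s hs]
      rw [this]; ring
    have hgc : ContinuousOn g (Icc 0 t) := by
      intro s hs
      exact (((hvc s hs.1).mul (((hFd s).neg.exp).continuousAt))).continuousWithinAt
    have := constant_of_has_deriv_right_zero hgc
      (fun x hx => (hgd x hx.1).hasDerivWithinAt) t (by constructor <;> [exact ht; exact le_rfl])
    have hF0 : F 0 = 0 := intervalIntegral.integral_same
    have hgt : v t * Real.exp (-F t) = v 0 := by
      simpa [hg, hF0] using this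
    have h0pos := h0.1
    nlinarith [Real.exp_pos (-F t), mul_pos (mul_pos h0pos (Real.exp_pos (F t)))
      (Real.exp_pos (-F t)), Real.exp_pos (F t)]
  -- v t > 0 alternative derivation: from v t * exp(-F t) = v 0 > 0 and exp > 0
  -- derivative bound : deriv v x ≤ -lam2 * (v x)^2 for x > 0
  have hderiv_eq : ∀ x : ℝ, 0 ≤ x → deriv v x = (lam2 * (ustar - v x) - δ) * v x :=
    fun x hx => (hderiv x hx).deriv
  have hvcont : ContinuousOn v (Ici 0) := fun x hx => (hvc x hx).continuousWithinAt
  have hvdiff : DifferentiableOn ℝ v (interior (Ici (0:ℝ))) := by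
    rw [interior_Ici]
    exact fun x hx => ((hderiv x (le_of_lt hx)).differentiableAt).differentiableWithinAt
  -- v is antitone on [0,∞)
  have hanti : AntitoneOn v (Ici 0) := by
    apply antitoneOn_of_deriv_nonpos (convex_Ici 0) hvcont hvdiff
    intro x hx
    rw [interior_Ici] at hx
    rw [hderiv_eq x (le_of_lt hx)]
    have hvx := hpos x (le_of_lt hx)
    have h1 : lam2 * (ustar - v x) - δ ≤ 0 := by nlinarith [mul_pos hlam2 hvx]
    exact mul_nonpos_of_nonpos_of_nonneg h1 hvx.le
  have hwanti : Antitone w := by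
    intro a b hab
    exact hanti (le_max_right a 0) (le_max_right b 0) (max_le_max hab le_rfl)
  have hbdd : BddBelow (range w) := by
    refine ⟨0, ?_⟩
    rintro y ⟨t, rfl⟩
    exact (hpos _ (le_max_right t 0)).le
  set L : ℝ := ⨅ t, w t with hL
  have htend : Tendsto w atTop (nhds L) := tendsto_atTop_ciInf hwanti hbdd
  have hL0 : 0 ≤ L := le_ciInf fun t => (hpos _ (le_max_right t 0)).le
  have hLle : ∀ t : ℝ, L ≤ w t := fun t => ciInf_le hbdd t
  -- L = 0
  have hLzero : L = 0 := by
    by_contra hne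
    have hLpos : 0 < L := lt_of_le_of_ne hL0 (Ne.symm hne)
    -- deriv bound
    have hbound : ∀ x ∈ interior (Ici (0:ℝ)), deriv v x ≤ -(lam2 * L ^ 2) := by
      intro x hx
      rw [interior_Ici] at hx
      rw [hderiv_eq x hx.le]
      have hvx := hpos x hx.le
      have hvL : L ≤ v x := by
        have := hLle x
        rwa [hweq x hx.le] at this
      have h1 : lam2 * (ustar - v x) - δ ≤ -(lam2 * v x) := by
        nlinarith [mul_pos hlam2 hvx]
      have h2 : (lam2 * (ustar - v x) - δ) * v x ≤ -(lam2 * v x) * v x :=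
        mul_le_mul_of_nonneg_right h1 hvx.le
      nlinarith [mul_le_mul_of_nonneg_left (mul_le_mul hvL hvL hL0 hvx.le) hlam2.le]
    set t0 : ℝ := v 0 / (lam2 * L ^ 2) with ht0
    have hden : 0 < lam2 * L ^ 2 := by positivity
    have ht0pos : 0 ≤ t0 := le_of_lt (div_pos h0.1 hden)
    have hmv := (convex_Ici (0:ℝ)).image_sub_le_mul_sub_of_deriv_le hvcont hvdiff hbound
      0 self_mem_Ici t0 ht0pos ht0pos
    have hval : lam2 * L ^ 2 * t0 = v 0 := by
      rw [ht0]; field_simp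
    have hvt0 : L ≤ v t0 := by
      have := hLle t0
      rwa [hweq t0 ht0pos] at this
    nlinarith
  -- conclude
  have : Tendsto w atTop (nhds 0) := hLzero ▸ htend
  apply this.congr'
  filter_upwards [eventually_ge_atTop (0:ℝ)] with t ht
  exact hweq t ht
end

section
/- Let λ₂ > 0, δ ≥ 0, and u* ∈ (0,1] with λ₂·u* > δ. Then every differentiable solution v : [0,∞) → ℝ of v' = (λ₂(u* − v) − δ)v with v(0) ∈ (0, u*] satisfies v(t) → u* − δ/λ₂ as t → ∞, and this limit is strictly positive. -/
open Filter Real Set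

theorem meanField_infection_survival (lam2 δ ustar : ℝ)
    (hlam2 : 0 < lam2) (hδ : 0 ≤ δ) (hu : ustar ∈ Set.Ioc (0 : ℝ) 1)
    (hsup : lam2 * ustar > δ)
    (v : ℝ → ℝ)
    (hderiv : ∀ t : ℝ, 0 ≤ t → HasDerivAt v ((lam2 * (ustar - v t) - δ) * v t) t)
    (h0 : v 0 ∈ Set.Ioc (0 : ℝ) ustar) :
    Tendsto v atTop (nhds (ustar - δ / lam2)) ∧ 0 < ustar - δ / lam2 := by
  obtain ⟨hu0, hu1⟩ := hu
  obtain ⟨hv00, hv0u⟩ := h0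
  have hlam2' : lam2 ≠ 0 := hlam2.ne'
  set L : ℝ := ustar - δ / lam2 with hLdef
  have hL : 0 < L := by
    have : δ / lam2 < ustar := (div_lt_iff₀ hlam2).mpr (by linarith)
    simp only [hLdef]; linarith
  refine ⟨?_, hL⟩
  have hL2 : lam2 * ustar - δ = lam2 * L := by
    rw [hLdef]; field_simp
  set a : ℝ := lam2 * L with hadef
  have ha : 0 < a := mul_pos hlam2 hL
  set C : ℝ := (L - v 0) / v 0 with hCdef
  have hv0 : v 0 ≠ 0 := hv00.ne'
  have hC1 : 0 < 1 + C := by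
    have h : 1 + C = L / v 0 := by rw [hCdef]; field_simp; ring
    rw [h]; positivity
  set D : ℝ → ℝ := fun t => 1 + C * Real.exp (-(a * t)) with hDdef
  have hDpos : ∀ t : ℝ, 0 ≤ t → 0 < D t := by
    intro t ht
    have he0 : 0 < Real.exp (-(a * t)) := Real.exp_pos _
    have he1 : Real.exp (-(a * t)) ≤ 1 := by
      rw [Real.exp_le_one_iff]
      nlinarith
    simp only [hDdef]
    nlinarith [mul_pos he0 hC1]
  set φ : ℝ → ℝ := fun t => L * (D t)⁻¹ with hφdef
  have hφ0 : φ 0 = v 0 := by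
    simp only [hφdef, hDdef, mul_zero, neg_zero, Real.exp_zero, mul_one, hCdef]
    field_simp
    rw [add_sub_cancel, div_self hL.ne']
  have hφderiv : ∀ t : ℝ, 0 ≤ t → HasDerivAt φ ((lam2 * (ustar - φ t) - δ) * φ t) t := by
    intro t ht
    have h1 : HasDerivAt (fun s : ℝ => -(a * s)) (-a) t := by
      simpa using (hasDerivAt_id t).const_mul (-a)
    have h2 := h1.exp
    have h3 : HasDerivAt D (C * (Real.exp (-(a * t)) * -a)) t := (h2.const_mul C).const_add 1
    have hD0 : D t ≠ 0 := (hDpos t ht).ne'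
    have h4 := (h3.inv hD0).const_mul L
    convert h4 using 1
    · rfl
    · rfl
    · rfl
    have hDt : D t = 1 + C * Real.exp (-(a * t)) := rfl
    have hφt : φ t = L * (D t)⁻¹ := rfl
    rw [hφt]
    clear_value φ D C a L
    field_simp
    linear_combination (D t) * hL2 + a * hDt
      + hadef
  have hDcont : Continuous D := by
    simp only [hDdef]; fun_prop
  have hφcont : ∀ T : ℝ, ContinuousOn φ (Icc 0 T) := by
    intro T
    exact continuousOn_const.mul ((hDcont.continuousOn).inv₀ fun t ht => (hDpos t ht.1).ne')
  have hvcont : ∀ T : ℝ, ContinuousOn v (Icc 0 T) := by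
    intro T t ht
    exact (hderiv t ht.1).continuousAt.continuousWithinAt
  have heq : ∀ t : ℝ, 0 ≤ t → v t = φ t := by
    intro T hT
    obtain ⟨M1, hM1⟩ := (isCompact_Icc : IsCompact (Icc (0:ℝ) T)).exists_bound_of_continuousOn (hvcont T)
    obtain ⟨M2, hM2⟩ := (isCompact_Icc : IsCompact (Icc (0:ℝ) T)).exists_bound_of_continuousOn (hφcont T)
    set M : ℝ := max M1 M2 with hMdef
    have hM0 : 0 ≤ M := le_trans (norm_nonneg (v 0))
      ((hM1 0 ⟨le_refl 0, hT⟩).trans (le_max_left _ _))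
    have hbv : ∀ t ∈ Ico (0:ℝ) T, v t ∈ Icc (-M) M := by
      intro t ht
      have := (hM1 t ⟨ht.1, ht.2.le⟩).trans (le_max_left M1 M2)
      rw [Real.norm_eq_abs, abs_le] at this
      exact this
    have hbφ : ∀ t ∈ Ico (0:ℝ) T, φ t ∈ Icc (-M) M := by
      intro t ht
      have := (hM2 t ⟨ht.1, ht.2.le⟩).trans (le_max_right M1 M2)
      rw [Real.norm_eq_abs, abs_le] at this
      exact this
    set Kc : ℝ := lam2 * (|L| + 2 * M) with hKcdef
    have hK0 : 0 ≤ Kc := by positivity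
    have hlip : ∀ s : ℝ, LipschitzOnWith Kc.toNNReal
        (fun x : ℝ => (lam2 * (ustar - x) - δ) * x) (Icc (-M) M) := by
      intro s
      rw [lipschitzOnWith_iff_dist_le_mul]
      intro x hx y hy
      rw [Real.dist_eq, Real.dist_eq, Real.coe_toNNReal _ hK0]
      have key : (lam2 * (ustar - x) - δ) * x - (lam2 * (ustar - y) - δ) * y
          = lam2 * ((L - (x + y)) * (x - y)) := by
        linear_combination (x - y) * hL2
      rw [key, abs_mul, abs_mul, abs_of_pos hlam2]
      have hx' : |x| ≤ M := abs_le.mpr ⟨hx.1, hx.2⟩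
      have hy' : |y| ≤ M := abs_le.mpr ⟨hy.1, hy.2⟩
      have h1 : |L - (x + y)| ≤ |L| + 2 * M := by
        calc |L - (x + y)| ≤ |L| + |x + y| := abs_sub _ _
          _ ≤ |L| + (|x| + |y|) := by gcongr; exact abs_add_le _ _
          _ ≤ |L| + 2 * M := by linarith
      rw [hKcdef, mul_assoc]
      gcongr
    have := ODE_solution_unique_of_mem_Icc_right
      (v := fun _ x => (lam2 * (ustar - x) - δ) * x)
      (s := fun _ => Icc (-M) M) (K := Kc.toNNReal)
      (hv := fun s _ => hlip s)
      (hvcont T) (fun t ht => (hderiv t ht.1).hasDerivWithinAt) hbv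
      (hφcont T) (fun t ht => (hφderiv t ht.1).hasDerivWithinAt) hbφ hφ0.symm
    exact this ⟨hT, le_refl T⟩
  have hDt : Tendsto D atTop (nhds 1) := by
    have h1 : Tendsto (fun t : ℝ => a * t) atTop atTop :=
      Tendsto.const_mul_atTop ha tendsto_id
    have h2 : Tendsto (fun t : ℝ => -(a * t)) atTop atBot := tendsto_neg_atBot_iff.mpr h1
    have h3 := Real.tendsto_exp_atBot.comp h2
    have h4 := (h3.const_mul C).const_add 1
    simpa using h4
  have hφt : Tendsto φ atTop (nhds L) := by
    have := (hDt.inv₀ one_ne_zero).const_mul L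
    simpa using this
  refine hφt.congr' ?_
  filter_upwards [eventually_ge_atTop (0:ℝ)] with t ht
  exact (heq t ht).symm
end
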